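/- Let M be the unipotent lower-triangular matrix [[1,0,0],[x,1,0],[z,y,1]] over ℂ. Then its inverse is [[1,0,0],[−x,1,0],[xy−z,−y,1]], and the Goncharov big period P = Σ_k ⟨f₂, M v_k⟩ ⊗ ⟨f_k, M⁻¹ v₀⟩ (with v_k columns of A = [[1,0,0],[x,2πi,0],[z,2πi·y,(2πi)²]] and f_k the dual basis) equals z/(2πi)² ⊗ 1 − 1 ⊗ z/(2πi)² + 1 ⊗ xy/(2πi)² − y/(2πi) ⊗ x/(2πi) in ℂ ⊗_ℚ ℂ. -/

import Mathlib

open Matrix TensorProduct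

noncomputable section

set_option maxHeartbeats 1600000 in
lemma stmt12_aux (x y z c : ℂ) (hc : c ≠ 0) :
    (!![1, 0, 0; x, 1, 0; z, y, 1] * !![1, 0, 0; -x, 1, 0; x * y - z, -y, 1]
      = (1 : Matrix (Fin 3) (Fin 3) ℂ)) ∧
      (∑ k : Fin 3,
        (((!![1, 0, 0; x, c, 0; z, c * y, c ^ 2] : Matrix (Fin 3) (Fin 3) ℂ)⁻¹ *
            !![1, 0, 0; x, 1, 0; z, y, 1] * !![1, 0, 0; x, c, 0; z, c * y, c ^ 2]) 2 k) ⊗ₜ[ℚ]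
        (((!![1, 0, 0; x, c, 0; z, c * y, c ^ 2] : Matrix (Fin 3) (Fin 3) ℂ)⁻¹ *
            !![1, 0, 0; -x, 1, 0; x * y - z, -y, 1] *
            !![1, 0, 0; x, c, 0; z, c * y, c ^ 2]) k 0))
      = (z / c ^ 2) ⊗ₜ[ℚ] 1 - 1 ⊗ₜ[ℚ] (z / c ^ 2)
          + 1 ⊗ₜ[ℚ] (x * y / c ^ 2) - (y / c) ⊗ₜ[ℚ] (x / c) := by
  have hAinv : (!![1, 0, 0; x, c, 0; z, c * y, c ^ 2] : Matrix (Fin 3) (Fin 3) ℂ)⁻¹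
      = !![1, 0, 0; -x / c, 1 / c, 0;
          (x * y - z) / c ^ 2, -y / c ^ 2, 1 / c ^ 2] := by
    apply Matrix.inv_eq_left_inv
    ext i j
    fin_cases i <;> fin_cases j <;>
      · simp [Matrix.mul_apply, Fin.sum_univ_three]
        try field_simp [hc]
        try ring
  have h1 : !![1, 0, 0; x, 1, 0; z, y, 1] * !![1, 0, 0; -x, 1, 0; x * y - z, -y, 1]
      = (1 : Matrix (Fin 3) (Fin 3) ℂ) := by
    ext i j
    fin_cases i <;> fin_cases j <;>
      · simp [Matrix.mul_apply, Fin.sum_univ_three]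
        try ring
  refine ⟨h1, ?_⟩
  rw [hAinv]
  have e1 : (!![1, 0, 0; -x / c, 1 / c, 0;
        (x * y - z) / c ^ 2, -y / c ^ 2, 1 / c ^ 2] : Matrix (Fin 3) (Fin 3) ℂ) *
        !![1, 0, 0; x, 1, 0; z, y, 1] * !![1, 0, 0; x, c, 0; z, c * y, c ^ 2]
      = !![1, 0, 0; x / c, 1, 0; z / c ^ 2, y / c, 1] := by
    ext i j
    fin_cases i <;> fin_cases j <;>
      · simp [Matrix.mul_apply, Fin.sum_univ_three]
        try field_simp [hc]
        try ring
  have e2 : (!![1, 0, 0; -x / c, 1 / c, 0;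
        (x * y - z) / c ^ 2, -y / c ^ 2, 1 / c ^ 2] : Matrix (Fin 3) (Fin 3) ℂ) *
        !![1, 0, 0; -x, 1, 0; x * y - z, -y, 1] * !![1, 0, 0; x, c, 0; z, c * y, c ^ 2]
      = !![1, 0, 0; -x / c, 1, 0; (x * y - z) / c ^ 2, -(y / c), 1] := by
    ext i j
    fin_cases i <;> fin_cases j <;>
      · simp [Matrix.mul_apply, Fin.sum_univ_three]
        try field_simp [hc]
        try ring
  rw [e1, e2]
  have key : (x * y - z) / c ^ 2 = x * y / c ^ 2 - z / c ^ 2 := by ring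
  simp only [Fin.sum_univ_three, key]
  norm_num [TensorProduct.tmul_sub, TensorProduct.sub_tmul, TensorProduct.tmul_neg, TensorProduct.neg_tmul, neg_div]
  simp [TensorProduct.tmul_add, TensorProduct.tmul_sub, TensorProduct.tmul_neg, sub_eq_add_neg]
  abel

/-- Computation of Goncharov's big period (equation (31) of the paper): with
`M = [[1,0,0],[x,1,0],[z,y,1]]`, its inverse is `[[1,0,0],[−x,1,0],[xy−z,−y,1]]`,
and, pairing via the period matrix `A = [[1,0,0],[x,2πi,0],[z,2πi·y,(2πi)²]]`
(so that `⟨f₂, M v_k⟩ = (A⁻¹MA)_{2,k}` and `⟨f_k, M⁻¹ v₀⟩ = (A⁻¹M⁻¹A)_{k,0}`),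
`P = Σ_k ⟨f₂, M v_k⟩ ⊗ ⟨f_k, M⁻¹ v₀⟩`
`  = z/(2πi)² ⊗ 1 − 1 ⊗ z/(2πi)² + 1 ⊗ xy/(2πi)² − y/(2πi) ⊗ x/(2πi)` in `ℂ ⊗_ℚ ℂ`. -/
theorem stmt12 (x y z : ℂ) :
    letI c : ℂ := 2 * Real.pi * Complex.I
    letI M : Matrix (Fin 3) (Fin 3) ℂ := !![1, 0, 0; x, 1, 0; z, y, 1]
    letI Minv : Matrix (Fin 3) (Fin 3) ℂ := !![1, 0, 0; -x, 1, 0; x * y - z, -y, 1]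
    letI A : Matrix (Fin 3) (Fin 3) ℂ := !![1, 0, 0; x, c, 0; z, c * y, c ^ 2]
    M * Minv = 1 ∧
      (∑ k : Fin 3,
        ((A⁻¹ * M * A) 2 k) ⊗ₜ[ℚ] ((A⁻¹ * Minv * A) k 0))
      = (z / c ^ 2) ⊗ₜ[ℚ] 1 - 1 ⊗ₜ[ℚ] (z / c ^ 2)
          + 1 ⊗ₜ[ℚ] (x * y / c ^ 2) - (y / c) ⊗ₜ[ℚ] (x / c) := by
  have hpi : (Real.pi : ℂ) ≠ 0 := Complex.ofReal_ne_zero.mpr Real.pi_ne_zero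
  exact stmt12_aux x y z (2 * Real.pi * Complex.I)
    (by simp [hpi, Complex.I_ne_zero])

end
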